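/- Let N ≥ 1, let y₁, …, y_N be integers with y_i > 1 for all i, let α be a positive integer, set z_i = α·y_i and p = 2N+1, and let a₁, …, a_{4N+3} be the sequence of rationals consisting of z₁, …, z_N, followed by N+1 copies of 1/p, followed by 2N+2 copies of 0. If there exists a permutation π of {1,…,4N+3} such that ∑_{u=1}^{4N+3} a_{π(u)} · a_{π(u+1)} = α²/p (with π(4N+4) := π(1)), then there exist γ₁, …, γ_N ∈ {0,1,2} with ∑_{i=1}^N z_i γ_i = α², equivalently ∑_{i=1}^N y_i γ_i = α. (Reverse direction, case (ii), of the paper's Theorem 4.1.) -/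

import Mathlib

set_option maxHeartbeats 1000000 in
/-- Reverse direction (case (ii)) of the paper's Theorem 4.1: if the sequence `a`
consisting of `z₁,…,z_N` (`z_i = α·y_i`), then `N+1` copies of `1/p` (`p = 2N+1`),
then `2N+2` zeros, has a cyclic arrangement `π` of total adjacent-product cost
exactly `α²/p`, then some `γ₁,…,γ_N ∈ {0,1,2}` satisfy `∑ z_i γ_i = α²`,
equivalently `∑ y_i γ_i = α`. -/
theorem exact_cost_tour_reverse (N : ℕ) (hN : 1 ≤ N) (y : Fin N → ℤ)
    (hy : ∀ i, 1 < y i) (α : ℕ) (hα : 0 < α) :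
    let a : Fin (4 * N + 3) → ℚ := fun u =>
      if h : (u : ℕ) < N then ((α : ℚ) * (y ⟨u, h⟩ : ℚ))
      else if (u : ℕ) < 2 * N + 1 then 1 / (2 * N + 1 : ℚ)
      else 0
    (∃ π : Equiv.Perm (Fin (4 * N + 3)),
        ∑ u : Fin (4 * N + 3), a (π u) * a (π (u + 1))
          = (α : ℚ) ^ 2 / (2 * N + 1 : ℚ)) →
      ∃ γ : Fin N → ℕ, (∀ i, γ i ≤ 2) ∧
        ∑ i, (α : ℤ) * y i * (γ i : ℤ) = (α : ℤ) ^ 2 ∧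
        ∑ i, y i * (γ i : ℤ) = (α : ℤ) := by
  intro a hex
  classical
  obtain ⟨π, hπ⟩ := hex
  have haval : a = (fun u : Fin (4 * N + 3) =>
      if h : (u : ℕ) < N then ((α : ℚ) * (y ⟨u, h⟩ : ℚ))
      else if (u : ℕ) < 2 * N + 1 then 1 / (2 * N + 1 : ℚ)
      else 0) := rfl
  set A : Fin (4 * N + 3) → ℤ := fun v =>
    if h : (v : ℕ) < N then (α : ℤ) * y ⟨v, h⟩ else 0 with hAdef
  set χ : Fin (4 * N + 3) → ℤ := fun v =>
    if (v : ℕ) < N then 0 else if (v : ℕ) < 2 * N + 1 then 1 else 0 with hχdef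
  have hpQ : (2 * (N : ℚ) + 1) ≠ 0 := by positivity
  have hpZ : (2 * (N : ℤ) + 1) ≠ 0 := by omega
  have ha : ∀ v, a v = (A v : ℚ) + (χ v : ℚ) / (2 * (N : ℚ) + 1) := by
    intro v
    rw [haval]
    simp only [hAdef, hχdef]
    split_ifs with h1 h2
    · push_cast; field_simp; ring
    · push_cast
      have : (2 * (N : ℚ) + 1) = ((2 * N + 1 : ℕ) : ℚ) := by push_cast; ring
      field_simp
      ring
    · push_cast; field_simp; ring
  -- the four integer sums
  set SAA : ℤ := ∑ u : Fin (4 * N + 3), A (π u) * A (π (u + 1)) with hSAAdef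
  set SAX : ℤ := ∑ u : Fin (4 * N + 3), A (π u) * χ (π (u + 1)) with hSAXdef
  set SXA : ℤ := ∑ u : Fin (4 * N + 3), χ (π u) * A (π (u + 1)) with hSXAdef
  set SXX : ℤ := ∑ u : Fin (4 * N + 3), χ (π u) * χ (π (u + 1)) with hSXXdef
  have key : ∑ u : Fin (4 * N + 3), a (π u) * a (π (u + 1))
      = (SAA : ℚ) + ((SAX : ℚ) + (SXA : ℚ)) / (2 * (N : ℚ) + 1)
        + (SXX : ℚ) / (2 * (N : ℚ) + 1) ^ 2 := by
    simp only [hSAAdef, hSAXdef, hSXAdef, hSXXdef]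
    push_cast
    rw [add_div, Finset.sum_div, Finset.sum_div, Finset.sum_div,
      ← Finset.sum_add_distrib, ← Finset.sum_add_distrib, ← Finset.sum_add_distrib]
    apply Finset.sum_congr rfl
    intro u _
    rw [ha, ha]
    field_simp
    ring
  have hπ' : (SAA : ℚ) + ((SAX : ℚ) + (SXA : ℚ)) / (2 * (N : ℚ) + 1)
        + (SXX : ℚ) / (2 * (N : ℚ) + 1) ^ 2
      = (α : ℚ) ^ 2 / (2 * N + 1 : ℚ) := by rw [← key]; exact hπ
  have EZ : (2 * (N : ℤ) + 1) ^ 2 * SAA + (2 * N + 1) * (SAX + SXA) + SXX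
      = (2 * N + 1) * (α : ℤ) ^ 2 := by
    have hq : ((2 * (N : ℤ) + 1) ^ 2 * SAA + (2 * N + 1) * (SAX + SXA) + SXX : ℚ)
        = ((2 * (N : ℤ) + 1) * (α : ℤ) ^ 2 : ℚ) := by
      have h3 : ((2 * (N : ℚ) + 1) ^ 2) ≠ 0 := pow_ne_zero _ hpQ
      apply mul_left_cancel₀ h3
      push_cast
      field_simp at hπ'
      linear_combination (2 * (N : ℚ) + 1) ^ 2 * hπ'
    exact_mod_cast hq
  -- χ is a 0/1 function summing to N+1
  have hχ01 : ∀ v, χ v = 0 ∨ χ v = 1 := by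
    intro v; simp only [hχdef]; split_ifs <;> simp
  have hχ0 : ∀ v, 0 ≤ χ v := by intro v; rcases hχ01 v with h | h <;> omega
  have hχ1 : ∀ v, χ v ≤ 1 := by intro v; rcases hχ01 v with h | h <;> omega
  have hA0 : ∀ v, 0 ≤ A v := by
    intro v; simp only [hAdef]
    split_ifs with h
    · have := (hy ⟨v, h⟩).le; positivity
    · exact le_refl 0
  have hsumχ : ∑ v : Fin (4 * N + 3), χ v = (N : ℤ) + 1 := by
    simp only [hχdef]
    rw [Fin.sum_univ_eq_sum_range
      (fun k => if k < N then 0 else if k < 2 * N + 1 then (1 : ℤ) else 0)]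
    have : ∀ k, (if k < N then 0 else if k < 2 * N + 1 then (1 : ℤ) else 0)
        = if k ∈ Finset.Ico N (2 * N + 1) then 1 else 0 := by
      intro k; simp only [Finset.mem_Ico]; split_ifs <;> omega
    rw [Finset.sum_congr rfl fun k _ => this k, Finset.sum_ite_mem]
    have hint : Finset.range (4 * N + 3) ∩ Finset.Ico N (2 * N + 1)
        = Finset.Ico N (2 * N + 1) := by
      apply Finset.inter_eq_right.2
      intro k hk
      simp only [Finset.mem_Ico] at hk
      simp only [Finset.mem_range]
      omega
    rw [hint, Finset.sum_const, Nat.card_Ico]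
    simp
    omega
  -- SXX is between 0 and N+1
  have hSXXnn : 0 ≤ SXX :=
    Finset.sum_nonneg fun u _ => mul_nonneg (hχ0 _) (hχ0 _)
  have hSXXle : SXX ≤ (N : ℤ) + 1 := by
    calc SXX ≤ ∑ u : Fin (4 * N + 3), χ (π u) := by
          apply Finset.sum_le_sum
          intro u _
          calc χ (π u) * χ (π (u + 1)) ≤ χ (π u) * 1 :=
                mul_le_mul_of_nonneg_left (hχ1 _) (hχ0 _)
            _ = χ (π u) := mul_one _
      _ = ∑ v : Fin (4 * N + 3), χ v := Equiv.sum_comp π χ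
      _ = (N : ℤ) + 1 := hsumχ
  -- divisibility forces SXX = 0
  have hSXX0 : SXX = 0 := by
    have hdvd : (2 * (N : ℤ) + 1) ∣ SXX :=
      ⟨(α : ℤ) ^ 2 - (2 * N + 1) * SAA - (SAX + SXA), by linarith [EZ]⟩
    obtain ⟨k, hk⟩ := hdvd
    have hk0 : k = 0 := by
      by_contra hne
      rcases lt_or_gt_of_ne hne with hlt | hgt
      · have : (2 * (N : ℤ) + 1) * k < 0 :=
          mul_neg_of_pos_of_neg (by positivity) hlt
        omega
      · have h1k : (1 : ℤ) ≤ k := hgt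
        have : (2 * (N : ℤ) + 1) * 1 ≤ (2 * N + 1) * k :=
          mul_le_mul_of_nonneg_left h1k (by positivity)
        omega
    rw [hk, hk0, mul_zero]
  -- cancel p : p * SAA + SAX + SXA = α²
  have E2 : (2 * (N : ℤ) + 1) * SAA + SAX + SXA = (α : ℤ) ^ 2 := by
    have : (2 * (N : ℤ) + 1) * ((2 * (N : ℤ) + 1) * SAA + SAX + SXA)
        = (2 * (N : ℤ) + 1) * (α : ℤ) ^ 2 := by rw [hSXX0] at EZ; ring_nf; ring_nf at EZ; linarith
    exact mul_left_cancel₀ hpZ this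
  have hSAXnn : 0 ≤ SAX :=
    Finset.sum_nonneg fun u _ => mul_nonneg (hA0 _) (hχ0 _)
  have hSXAnn : 0 ≤ SXA :=
    Finset.sum_nonneg fun u _ => mul_nonneg (hχ0 _) (hA0 _)
  -- SAA = 0
  have hAbig : ∀ v, A v ≠ 0 → 2 * (α : ℤ) ≤ A v := by
    intro v hne
    simp only [hAdef] at hne ⊢
    split_ifs at hne ⊢ with h
    · have h2 : (2 : ℤ) ≤ y ⟨v, h⟩ := hy _
      have hα1 : (1 : ℤ) ≤ (α : ℤ) := by exact_mod_cast hα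
      nlinarith
    · exact absurd rfl hne

  have hSAA0 : SAA = 0 := by
    by_cases hall : ∀ u : Fin (4 * N + 3), A (π u) * A (π (u + 1)) = 0
    · exact Finset.sum_eq_zero fun u _ => hall u
    · push_neg at hall
      obtain ⟨u, hu⟩ := hall
      have h1 : A (π u) ≠ 0 := fun h => hu (by rw [h, zero_mul])
      have h2 : A (π (u + 1)) ≠ 0 := fun h => hu (by rw [h, mul_zero])
      have hb1 := hAbig _ h1
      have hb2 := hAbig _ h2
      have hα1 : (1 : ℤ) ≤ (α : ℤ) := by exact_mod_cast hα
      have hterm : 4 * (α : ℤ) ^ 2 ≤ A (π u) * A (π (u + 1)) := by nlinarith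
      have hsum : A (π u) * A (π (u + 1)) ≤ SAA := by
        apply Finset.single_le_sum (f := fun u => A (π u) * A (π (u + 1)))
          (fun v _ => mul_nonneg (hA0 _) (hA0 _)) (Finset.mem_univ u)
      have hN3 : (3 : ℤ) ≤ 2 * (N : ℤ) + 1 := by
        have : (1 : ℤ) ≤ (N : ℤ) := by exact_mod_cast hN
        linarith
      have hSAAnn : 0 ≤ SAA :=
        Finset.sum_nonneg fun u _ => mul_nonneg (hA0 _) (hA0 _)
      have : 3 * (4 * (α : ℤ) ^ 2) ≤ (2 * (N : ℤ) + 1) * SAA := by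
        calc 3 * (4 * (α : ℤ) ^ 2) ≤ 3 * SAA := by
              have := le_trans hterm hsum; linarith
          _ ≤ (2 * (N : ℤ) + 1) * SAA := by nlinarith [hSAAnn, hN3]
      nlinarith
  have E3 : SAX + SXA = (α : ℤ) ^ 2 := by rw [hSAA0] at E2; linarith
  -- reindex the two mixed sums to be indexed by the value at a vertex
  have hSAX' : SAX = ∑ v : Fin (4 * N + 3), A v * χ (π (π.symm v + 1)) := by
    rw [hSAXdef, ← Equiv.sum_comp π (fun v => A v * χ (π (π.symm v + 1)))]
    apply Finset.sum_congr rfl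
    intro u _
    rw [Equiv.symm_apply_apply]
  have hSXA' : SXA = ∑ v : Fin (4 * N + 3), χ (π (π.symm v - 1)) * A v := by
    rw [hSXAdef, ← Equiv.sum_comp ((Equiv.addRight (1 : Fin (4 * N + 3))).trans π)
      (fun v => χ (π (π.symm v - 1)) * A v)]
    apply Finset.sum_congr rfl
    intro u _
    simp only [Equiv.trans_apply, Equiv.coe_addRight, Equiv.symm_apply_apply,
      add_sub_cancel_right]
  set g : Fin (4 * N + 3) → ℤ :=
    fun v => χ (π (π.symm v + 1)) + χ (π (π.symm v - 1)) with hgdef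
  have E4 : ∑ v : Fin (4 * N + 3), A v * g v = (α : ℤ) ^ 2 := by
    rw [← E3, hSAX', hSXA']
    rw [← Finset.sum_add_distrib]
    apply Finset.sum_congr rfl
    intro v _
    simp only [hgdef]
    ring
  -- restrict to the first N indices
  set emb : Fin N → Fin (4 * N + 3) := fun i => ⟨(i : ℕ), by omega⟩ with hembdef
  have hemb_inj : Function.Injective emb := by
    intro i j h
    simp only [hembdef, Fin.mk.injEq] at h
    exact Fin.ext h
  have hmem : ∀ v : Fin (4 * N + 3), v ∈ Finset.univ.image emb ↔ (v : ℕ) < N := by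
    intro v
    simp only [Finset.mem_image, Finset.mem_univ, true_and]
    constructor
    · rintro ⟨i, rfl⟩; exact i.2
    · intro h; exact ⟨⟨v, h⟩, Fin.ext rfl⟩
  have hAemb : ∀ i : Fin N, A (emb i) = (α : ℤ) * y i := by
    intro i
    simp only [hAdef, hembdef, dif_pos i.2]
  have E5 : ∑ i : Fin N, (α : ℤ) * y i * g (emb i) = (α : ℤ) ^ 2 := by
    calc ∑ i : Fin N, (α : ℤ) * y i * g (emb i)
        = ∑ i : Fin N, A (emb i) * g (emb i) :=
          Finset.sum_congr rfl fun i _ => by rw [hAemb]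
      _ = ∑ v ∈ Finset.univ.image emb, A v * g v :=
          (Finset.sum_image (f := fun v => A v * g v) (g := emb)
            (fun i _ j _ h => hemb_inj h)).symm
      _ = ∑ v : Fin (4 * N + 3), A v * g v := by
          apply Finset.sum_subset (Finset.subset_univ _)
          intro v _ hv
          have hvN : ¬ (v : ℕ) < N := fun h => hv ((hmem v).2 h)
          simp only [hAdef, dif_neg hvN, zero_mul]
      _ = (α : ℤ) ^ 2 := E4
  -- g takes values in {0, 1, 2}
  have hg0 : ∀ v, 0 ≤ g v := fun v => add_nonneg (hχ0 _) (hχ0 _)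
  have hg2 : ∀ v, g v ≤ 2 := fun v => by
    have := hχ1 (π (π.symm v + 1)); have := hχ1 (π (π.symm v - 1))
    simp only [hgdef]; omega
  refine ⟨fun i => (g (emb i)).toNat, ?_, ?_, ?_⟩
  · intro i
    show (g (emb i)).toNat ≤ 2
    have := hg2 (emb i)
    omega
  · have hcast : ∀ i : Fin N, ((g (emb i)).toNat : ℤ) = g (emb i) :=
      fun i => Int.toNat_of_nonneg (hg0 _)
    calc ∑ i, (α : ℤ) * y i * ((g (emb i)).toNat : ℤ)
        = ∑ i, (α : ℤ) * y i * g (emb i) :=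
          Finset.sum_congr rfl fun i _ => by rw [hcast]
      _ = (α : ℤ) ^ 2 := E5
  · have hαne : (α : ℤ) ≠ 0 := by exact_mod_cast hα.ne'
    apply mul_left_cancel₀ hαne
    rw [Finset.mul_sum]
    calc ∑ i, (α : ℤ) * (y i * ((g (emb i)).toNat : ℤ))
        = ∑ i, (α : ℤ) * y i * g (emb i) := by
          apply Finset.sum_congr rfl
          intro i _
          rw [Int.toNat_of_nonneg (hg0 _)]
          ring
      _ = (α : ℤ) ^ 2 := E5
      _ = (α : ℤ) * (α : ℤ) := sq (α : ℤ)
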